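/- Define D_s := ℂ \ {λ : Re λ ≥ (s/2)(Im λ)² - 1} for s > 0. Then there exists c > 0 (depending on s) such that for all λ ∈ D_s and all real μ ≥ 1, |μ - λ| ≥ c·μ^{1/2}. -/

import Mathlib

theorem region_distance_bound (s : ℝ) (hs : 0 < s) :
    ∃ c > (0 : ℝ), ∀ lam : ℂ, lam.re < s / 2 * lam.im ^ 2 - 1 →
      ∀ μ : ℝ, 1 ≤ μ → c * Real.sqrt μ ≤ ‖(μ : ℂ) - lam‖ := by
  refine ⟨min (1/2) (Real.sqrt s)⁻¹, lt_min (by norm_num) (by positivity), ?_⟩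
  intro lam hlam μ hμ
  set c := min (1/2 : ℝ) (Real.sqrt s)⁻¹ with hcdef
  have hc0 : 0 < c := lt_min (by norm_num) (by positivity)
  have hμ0 : (0:ℝ) ≤ μ := le_trans zero_le_one hμ
  have hsp : 0 < Real.sqrt s := Real.sqrt_pos.mpr hs
  have hss : Real.sqrt s ^ 2 = s := Real.sq_sqrt hs.le
  have key : c ^ 2 * μ ≤ (μ - lam.re) ^ 2 + lam.im ^ 2 := by
    rcases le_or_gt lam.re (μ / 2) with h | h
    · have h3 : c ≤ 1/2 := min_le_left _ _
      have h4 : μ ≤ μ ^ 2 := by nlinarith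
      have h1 : μ / 2 ≤ μ - lam.re := by linarith
      have h2 : (μ/2) ^ 2 ≤ (μ - lam.re) ^ 2 := by nlinarith
      have h5 : c ^ 2 ≤ (1/2) ^ 2 := by nlinarith
      nlinarith [sq_nonneg lam.im, mul_le_mul_of_nonneg_right h5 hμ0]
    · have hy : μ ≤ s * lam.im ^ 2 := by nlinarith
      have h3 : c ≤ (Real.sqrt s)⁻¹ := min_le_right _ _
      have hcs : c ^ 2 ≤ s⁻¹ := by
        have : ((Real.sqrt s)⁻¹) ^ 2 = s⁻¹ := by
          rw [inv_pow, hss]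
        nlinarith
      have h5 : s⁻¹ * μ ≤ lam.im ^ 2 := by
        rw [inv_mul_le_iff₀ hs] at *
        nlinarith
      nlinarith [sq_nonneg (μ - lam.re)]
  have habs : ‖(μ:ℂ) - lam‖ ^ 2 = (μ - lam.re) ^ 2 + lam.im ^ 2 := by
    rw [Complex.sq_norm, Complex.normSq_apply]
    simp [Complex.sub_re, Complex.sub_im]
    ring
  have := Real.sqrt_le_sqrt (key.trans_eq habs.symm)
  rwa [Real.sqrt_mul (sq_nonneg c), Real.sqrt_sq hc0.le,
    Real.sqrt_sq (norm_nonneg _)] at this
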